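/- Let n ≥ 2, α ∈ (0, 2/n), R > 0, T > 0, and define Ψ(x,t) = C_α ( T / (|x|² + R² (t+T)^{4/(2−nα)}) )^{1/α}, where C_α > 0 satisfies C_α^α = 2 n^{α−1} (2/α − n). Then for all x ∈ ℝⁿ and 0 < t < T one has the identity ∂_t Ψ − Σ_i ∂_{x_i}( n^{α−1} Ψ^{−α} ∂_{x_i} Ψ ) = −[ (2/(2−nα)) · R²(t+T)^{4/(2−nα)}/(|x|² + R²(t+T)^{4/(2−nα)}) · (T−t)/(T+t) + 1 ] · Ψ/(Tα), and consequently ∂_t Ψ − Σ_i ∂_{x_i}( n^{α−1} Ψ^{−α} ∂_{x_i} Ψ ) < −Ψ/(Tα) < 0. -/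

import Mathlib

/-- Partial derivative in the `i`-th coordinate direction. -/
noncomputable def pd {n : ℕ} (i : Fin n) (f : EuclideanSpace ℝ (Fin n) → ℝ)
    (x : EuclideanSpace ℝ (Fin n)) : ℝ :=
  fderiv ℝ f x (EuclideanSpace.single i (1 : ℝ))

private lemma aux_ident (ψ N S R T t α nn : ℝ) (hγ : 0 < 2 - nn * α)
    (hα : 0 < α) (hT : 0 < T) (hD : 0 < N + R^2*S) (htT' : 0 < t + T) (hTt : t < T) :
    -ψ / (α * (N + R^2*S)) * (R^2 * ((4/(2-nn*α)) * (S/(t+T)))) -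
      (-1/(T*(2-nn*α))) * (-ψ / (α * (N + R^2*S)) * 2 * N + nn * ψ) =
    -((2 / (2 - nn * α)) * (R^2*S) / (N + R^2*S) * ((T - t) / (T + t)) + 1) * (ψ / (T * α)) := by
  have h1 : (2 - nn*α) ≠ 0 := hγ.ne'
  have h2 : (N + R^2*S) ≠ 0 := hD.ne'
  have h3 : (t+T) ≠ 0 := htT'.ne'
  have h4 : (T+t) ≠ 0 := by intro h; linarith
  have h5 : (2 - α*nn) ≠ 0 := by rwa [mul_comm]
  field_simp
  ring

/-- Barrier identity in the supercritical range `α ∈ (0, 2/n)`, `n ≥ 2`, for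
`Ψ(x,t) = C_α (T/(|x|²+R²(t+T)^{4/(2−nα)}))^{1/α}` with
`C_α^α = 2n^{α−1}(2/α − n)`: on `0 < t < T` the quantity
`∂_tΨ − ∑_i ∂_{x_i}(n^{α−1}Ψ^{−α}∂_{x_i}Ψ)` equals the displayed expression
and is `< −Ψ/(Tα) < 0`. -/
theorem supercritical_barrier_subsolution (n : ℕ) (hn : 2 ≤ n) (α R T : ℝ)
    (hα : 0 < α ∧ α < 2 / (n : ℝ)) (hR : 0 < R) (hT : 0 < T)
    (Cα : ℝ) (hCpos : 0 < Cα)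
    (hCα : Cα ^ α = 2 * (n : ℝ) ^ (α - 1) * (2 / α - (n : ℝ)))
    (Ψ : EuclideanSpace ℝ (Fin n) → ℝ → ℝ)
    (hΨ : ∀ x s, Ψ x s = Cα *
      (T / (‖x‖ ^ 2 + R ^ 2 * (s + T) ^ (4 / (2 - n * α)))) ^ (1 / α)) :
    ∀ (x : EuclideanSpace ℝ (Fin n)) (t : ℝ), 0 < t → t < T →
      (deriv (Ψ x) t -
          ∑ i, pd i (fun y =>
            (n : ℝ) ^ (α - 1) * (Ψ y t) ^ (-α) * pd i (fun z => Ψ z t) y) x =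
        -((2 / (2 - n * α)) *
            (R ^ 2 * (t + T) ^ (4 / (2 - n * α))) /
              (‖x‖ ^ 2 + R ^ 2 * (t + T) ^ (4 / (2 - n * α))) *
            ((T - t) / (T + t)) + 1) * (Ψ x t / (T * α))) ∧
      (deriv (Ψ x) t -
          ∑ i, pd i (fun y =>
            (n : ℝ) ^ (α - 1) * (Ψ y t) ^ (-α) * pd i (fun z => Ψ z t) y) x <
        -(Ψ x t / (T * α))) ∧
      (-(Ψ x t / (T * α)) < 0) := by
  obtain ⟨hα0, hα2⟩ := hα
  have hn0 : (0:ℝ) < n := by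
    have : (2:ℝ) ≤ n := by exact_mod_cast hn
    linarith
  have hαne : α ≠ 0 := hα0.ne'
  have hγ : 0 < 2 - (n:ℝ) * α := by
    have := (lt_div_iff₀ hn0).mp hα2
    nlinarith
  have hq : 0 < 2/α - (n:ℝ) := by
    rw [sub_pos, lt_div_iff₀ hα0]
    nlinarith
  have hnr : (0:ℝ) < (n:ℝ)^(α-1) := Real.rpow_pos_of_pos hn0 _
  -- derivative of the profile function
  have hP : ∀ u : ℝ, 0 < u → HasDerivAt (fun u : ℝ => Cα * (T / u) ^ (1/α))
      (-(Cα * (T/u)^(1/α)) / (α * u)) u := by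
    intro u hu
    have h1 : HasDerivAt (fun u : ℝ => T / u) (T * (-(u^2)⁻¹)) u := by
      simpa [div_eq_mul_inv] using (hasDerivAt_inv hu.ne').const_mul T
    have h2 := (h1.rpow_const (p := 1/α) (Or.inl (div_pos hT hu).ne')).const_mul Cα
    refine h2.congr_deriv ?_
    rw [Real.rpow_sub (div_pos hT hu), Real.rpow_one]
    field_simp
  intro x t ht0 htT
  have htT' : (0:ℝ) < t + T := by linarith
  set β : ℝ := 4 / (2 - (n:ℝ) * α) with hβ
  set S : ℝ := (t + T) ^ β with hSdef
  have hS : (0:ℝ) < S := Real.rpow_pos_of_pos htT' β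
  set Ex : ℝ := R ^ 2 * S with hEdef
  have hEx : 0 < Ex := by positivity
  have hD : ∀ y : EuclideanSpace ℝ (Fin n), 0 < ‖y‖^2 + Ex := fun y => by positivity
  have hΨt : ∀ y : EuclideanSpace ℝ (Fin n),
      Ψ y t = Cα * (T / (‖y‖^2 + Ex)) ^ (1/α) := by
    intro y
    rw [hΨ, ← hSdef, ← hEdef]
  have hΨpos : ∀ y, 0 < Ψ y t := fun y => by
    rw [hΨt]
    have := hD y
    positivity
  -- time derivative
  have hDt : HasDerivAt (fun s : ℝ => ‖x‖^2 + R^2 * (s+T)^β)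
      (R^2 * (β * (t+T)^(β-1))) t := by
    have h0 : HasDerivAt (fun s : ℝ => s + T) 1 t := (hasDerivAt_id t).add_const T
    have h1 := h0.rpow_const (p := β) (Or.inl htT'.ne')
    have h2 := (h1.const_mul (R^2)).const_add (‖x‖^2)
    refine h2.congr_deriv ?_
    ring
  have hTime : HasDerivAt (Ψ x)
      (-(Ψ x t) / (α * (‖x‖^2 + Ex)) * (R^2 * (β * (t+T)^(β-1)))) t := by
    have hc := (hP (‖x‖^2 + R^2*(t+T)^β) (by positivity)).comp t hDt
    have hfun : Ψ x = (fun u : ℝ => Cα * (T/u)^(1/α)) ∘ (fun s => ‖x‖^2 + R^2*(s+T)^β) := by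
      funext s
      rw [hΨ]
      rfl
    rw [hfun]
    exact hc
  -- spatial derivative of Ψ(·, t)
  have key : ∀ y : EuclideanSpace ℝ (Fin n), ∃ L : EuclideanSpace ℝ (Fin n) →L[ℝ] ℝ,
      HasFDerivAt (fun z => Ψ z t) L y ∧
      ∀ i : Fin n, L (EuclideanSpace.single i 1)
        = -(Ψ y t) / (α * (‖y‖^2 + Ex)) * (2 * y i) := by
    intro y
    have hN : HasFDerivAt (fun z : EuclideanSpace ℝ (Fin n) => ‖z‖^2 + Ex)
        ((2:ℕ) • (innerSL ℝ y).comp (ContinuousLinearMap.id ℝ _)) y :=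
      ((hasFDerivAt_id y).norm_sq).add_const Ex
    have hcomp := (hP (‖y‖^2 + Ex) (hD y)).comp_hasFDerivAt y hN
    have hfun : (fun z => Ψ z t)
        = (fun u : ℝ => Cα * (T/u)^(1/α)) ∘ (fun z : EuclideanSpace ℝ (Fin n) => ‖z‖^2 + Ex) := by
      funext z
      rw [hΨt]
      rfl
    refine ⟨(-(Cα * (T/(‖y‖^2+Ex))^(1/α)) / (α * (‖y‖^2+Ex))) •
        ((2:ℕ) • (innerSL ℝ y).comp (ContinuousLinearMap.id ℝ _)), ?_, ?_⟩
    · rw [hfun]; exact hcomp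
    · intro i
      rw [hΨt]
      simp [EuclideanSpace.inner_single_right, real_inner_comm]
  have hpdΨ : ∀ (y : EuclideanSpace ℝ (Fin n)) (i : Fin n),
      pd i (fun z => Ψ z t) y = -(Ψ y t) / (α * (‖y‖^2 + Ex)) * (2 * y i) := by
    intro y i
    obtain ⟨L, hL, hLi⟩ := key y
    rw [pd, hL.fderiv]
    exact hLi i
  -- Ψ^(-α)
  have hΨrpow : ∀ y : EuclideanSpace ℝ (Fin n),
      (Ψ y t) ^ (-α) = α * (‖y‖^2 + Ex) / (2 * (n:ℝ)^(α-1) * (2 - (n:ℝ)*α) * T) := by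
    intro y
    have hTD : 0 < T / (‖y‖^2 + Ex) := div_pos hT (hD y)
    have hDy := hD y
    rw [hΨt, Real.mul_rpow hCpos.le (Real.rpow_nonneg hTD.le _),
        ← Real.rpow_mul hTD.le]
    have h1 : (1/α) * (-α) = -1 := by field_simp
    have h2 : 2/α - (n:ℝ) = (2 - (n:ℝ)*α)/α := by
      field_simp
    rw [h1, Real.rpow_neg_one, Real.rpow_neg hCpos.le, hCα, h2, inv_div]
    field_simp
  -- the flux function
  have hflux : ∀ i : Fin n,
      (fun y => (n:ℝ)^(α-1) * (Ψ y t)^(-α) * pd i (fun z => Ψ z t) y)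
        = fun y => (-1/(T*(2 - (n:ℝ)*α))) * (Ψ y t * y i) := by
    intro i
    funext y
    rw [hpdΨ, hΨrpow]
    have hDy := hD y
    field_simp [hnr.ne', hT.ne', hαne, hDy.ne', hγ.ne', hq.ne']
  have hpdflux : ∀ i : Fin n,
      pd i (fun y => (n:ℝ)^(α-1) * (Ψ y t)^(-α) * pd i (fun z => Ψ z t) y) x
        = (-1/(T*(2-(n:ℝ)*α)))
            * ((-(Ψ x t) / (α * (‖x‖^2 + Ex)) * (2 * x i)) * x i + Ψ x t) := by
    intro i
    rw [hflux i]
    obtain ⟨L, hL, hLi⟩ := key x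
    have hprod := ((hL.mul ((EuclideanSpace.proj (𝕜 := ℝ) i).hasFDerivAt)).const_mul
      (-1/(T*(2-(n:ℝ)*α))))
    rw [pd,
      show (fun y : EuclideanSpace ℝ (Fin n) => -1/(T*(2-(n:ℝ)*α)) * (Ψ y t * y i))
        = (fun y : EuclideanSpace ℝ (Fin n) =>
            -1/(T*(2-(n:ℝ)*α)) * ((fun z => Ψ z t) * ⇑(EuclideanSpace.proj (𝕜 := ℝ) i)) y) from rfl,
      hprod.fderiv]
    simp [hLi i, EuclideanSpace.single_apply]
    ring
  have hnormsq : ∑ i, (x i)^2 = ‖x‖^2 := by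
    rw [EuclideanSpace.norm_eq, Real.sq_sqrt (by positivity)]
    simp [sq_abs]
  have hsum : ∑ i, pd i (fun y =>
        (n:ℝ)^(α-1) * (Ψ y t)^(-α) * pd i (fun z => Ψ z t) y) x
      = (-1/(T*(2-(n:ℝ)*α)))
          * (-(Ψ x t) / (α * (‖x‖^2 + Ex)) * 2 * ‖x‖^2 + (n:ℝ) * Ψ x t) := by
    rw [Finset.sum_congr rfl fun i _ => hpdflux i, ← Finset.mul_sum]
    congr 1
    rw [Finset.sum_add_distrib, Finset.sum_const, Finset.card_univ, Fintype.card_fin,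
        nsmul_eq_mul]
    congr 1
    rw [← hnormsq, Finset.mul_sum]
    exact Finset.sum_congr rfl fun i _ => by ring
  rw [hTime.deriv, hsum]
  have hψ := hΨpos x
  have hpow : (t+T)^(β-1) = S/(t+T) := by
    rw [Real.rpow_sub htT', Real.rpow_one, ← hSdef]
  have hq1 : 0 < Ψ x t / (T*α) := by positivity
  have hA : 0 < (2 / (2 - (n:ℝ) * α)) * Ex / (‖x‖^2 + Ex) * ((T - t) / (T + t)) := by
    have h2 : 0 < T - t := by linarith
    have h3 := hD x
    positivity
  have heq : -(Ψ x t) / (α * (‖x‖^2 + Ex)) * (R^2 * (β * (t+T)^(β-1))) -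
      (-1/(T*(2-(n:ℝ)*α))) * (-(Ψ x t) / (α * (‖x‖^2 + Ex)) * 2 * ‖x‖^2 + (n:ℝ) * Ψ x t)
      = -((2 / (2 - (n:ℝ) * α)) * Ex / (‖x‖^2 + Ex) * ((T - t) / (T + t)) + 1)
          * (Ψ x t / (T * α)) := by
    have hDx : 0 < ‖x‖^2 + R^2*S := by
      rw [← hEdef]; exact hD x
    rw [hpow, hEdef, hβ]
    exact aux_ident (Ψ x t) (‖x‖^2) S R T t α (n:ℝ) hγ hα0 hT hDx htT' htT
  refine ⟨heq, ?_, ?_⟩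
  · rw [heq]
    nlinarith [mul_pos hA hq1]
  · linarith [hq1]
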